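/- Define τ(f) = inf{t ≥ 0 : f(t) ≤ 0} and τ^<(f) = inf{t ≥ 0 : f(t) < 0} for f in the Skorokhod space D([0,∞),ℝ). Suppose f is continuous, τ(f) < ∞, τ^<(f) = τ(f), and f(t) ≤ 0 for all t ≥ τ(f). If f_n → f in the Skorokhod topology on D([0,∞),ℝ), then τ(f_n) → τ(f). -/
import Mathlib


open Filter

/-- Locally uniform convergence on a set implies uniform convergence on compact subsets. -/
lemma tlu_compact {F : ℕ → ℝ → ℝ} {f : ℝ → ℝ} {s K : Set ℝ}
    (h : TendstoLocallyUniformlyOn F f atTop s) (hK : IsCompact K) (hKs : K ⊆ s) :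
    TendstoUniformlyOn F f atTop K := by
  intro u hu
  have key : ∀ x ∈ K, ∃ v : Set ℝ, IsOpen v ∧ x ∈ v ∧
      ∀ᶠ n in atTop, ∀ y ∈ v ∩ s, (f y, F n y) ∈ u := by
    intro x hx
    obtain ⟨t, ht, hev⟩ := h u hu x (hKs hx)
    obtain ⟨v, hvo, hxv, hvs⟩ := mem_nhdsWithin.mp ht
    exact ⟨v, hvo, hxv, hev.mono fun n hn y hy => hn y (hvs hy)⟩
  choose v hvo hxv hv using key
  obtain ⟨T, hT⟩ := hK.elim_nhds_subcover' (fun x hx => v x hx)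
    (fun x hx => (hvo x hx).mem_nhds (hxv x hx))
  have hev : ∀ᶠ n in atTop, ∀ x ∈ T, ∀ y ∈ v x x.2 ∩ s, (f y, F n y) ∈ u :=
    (eventually_all_finset T).mpr fun x _ => hv x x.2
  refine hev.mono fun n hn y hy => ?_
  obtain ⟨x, hxT, hyv⟩ := Set.mem_iUnion₂.mp (hT hy)
  exact hn x hxT y ⟨hyv, hKs hy⟩

/-- Continuity of the first hitting time of `(-∞,0]` along sequences converging (locally
uniformly on `[0,∞)`, as Skorokhod convergence to a continuous limit amounts to) to a
continuous limit `f` with `τ(f) < ∞`, `τ^<(f) = τ(f)`, and `f ≤ 0` after `τ(f)`. -/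
theorem hitting_time_convergence
    (f : ℝ → ℝ) (fn : ℕ → ℝ → ℝ)
    (hf : Continuous f)
    (hne : {t : ℝ | 0 ≤ t ∧ f t ≤ 0}.Nonempty)
    (hne' : {t : ℝ | 0 ≤ t ∧ f t < 0}.Nonempty)
    (hτeq : sInf {t : ℝ | 0 ≤ t ∧ f t < 0} = sInf {t : ℝ | 0 ≤ t ∧ f t ≤ 0})
    (hafter : ∀ t : ℝ, sInf {t : ℝ | 0 ≤ t ∧ f t ≤ 0} ≤ t → f t ≤ 0)
    (hconv : TendstoLocallyUniformlyOn fn f atTop (Set.Ici 0)) :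
    Tendsto (fun n => sInf {t : ℝ | 0 ≤ t ∧ fn n t ≤ 0}) atTop
      (nhds (sInf {t : ℝ | 0 ≤ t ∧ f t ≤ 0})) := by
  set S := {t : ℝ | 0 ≤ t ∧ f t ≤ 0} with hS
  set τ := sInf S with hτ
  have hbdd : BddBelow S := ⟨0, fun t ht => ht.1⟩
  have hτ0 : 0 ≤ τ := le_csInf hne fun t ht => ht.1
  rw [Metric.tendsto_nhds]
  intro ε hε
  -- Upper bound: find s ∈ [τ, τ + ε/2) with f s < 0
  have hbdd' : BddBelow {t : ℝ | 0 ≤ t ∧ f t < 0} := ⟨0, fun t ht => ht.1⟩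
  have hlt : sInf {t : ℝ | 0 ≤ t ∧ f t < 0} < τ + ε / 2 := by
    rw [hτeq]; linarith
  obtain ⟨s, hs, hsτ⟩ := (csInf_lt_iff hbdd' hne').mp hlt
  have hev1 : ∀ᶠ n in atTop, fn n s < 0 :=
    (hconv.tendsto_at (Set.mem_Ici.mpr hs.1)).eventually_lt_const hs.2
  -- Lower bound: eventually every point of the hitting set of fn n is ≥ τ - ε/2
  have hev2 : ∀ᶠ n in atTop, ∀ t : ℝ, 0 ≤ t → fn n t ≤ 0 → τ - ε / 2 ≤ t := by
    rcases le_or_gt τ (ε / 2) with hcase | hcase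
    · exact Eventually.of_forall fun n t ht _ => by linarith
    · set K := Set.Icc (0 : ℝ) (τ - ε / 2) with hK
      have hKne : K.Nonempty := ⟨0, le_refl 0, by linarith⟩
      have hKpos : ∀ x ∈ K, 0 < f x := by
        intro x hx
        by_contra hle
        push_neg at hle
        have : τ ≤ x := csInf_le hbdd ⟨hx.1, hle⟩
        have : x ≤ τ - ε / 2 := hx.2
        linarith
      obtain ⟨x₀, hx₀, hmin⟩ := isCompact_Icc.exists_isMinOn hKne hf.continuousOn
      have hδ : 0 < f x₀ := hKpos x₀ hx₀
      have hU := tlu_compact (K := K) hconv isCompact_Icc (fun x hx => hx.1)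
      have := (Metric.tendstoUniformlyOn_iff.mp hU) (f x₀) hδ
      refine this.mono fun n hn t ht hft => ?_
      by_contra hlt'
      push_neg at hlt'
      have htK : t ∈ K := ⟨ht, hlt'.le⟩
      have h1 : dist (f t) (fn n t) < f x₀ := hn t htK
      have h2 : f x₀ ≤ f t := hmin htK
      rw [Real.dist_eq] at h1
      have := abs_lt.mp h1
      linarith [this.1, this.2]
  filter_upwards [hev1, hev2] with n h1 h2
  have hsSn : s ∈ {t : ℝ | 0 ≤ t ∧ fn n t ≤ 0} := ⟨hs.1, h1.le⟩
  have hbddn : BddBelow {t : ℝ | 0 ≤ t ∧ fn n t ≤ 0} := ⟨0, fun t ht => ht.1⟩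
  have hub : sInf {t : ℝ | 0 ≤ t ∧ fn n t ≤ 0} ≤ s := csInf_le hbddn hsSn
  have hlb : τ - ε / 2 ≤ sInf {t : ℝ | 0 ≤ t ∧ fn n t ≤ 0} :=
    le_csInf ⟨s, hsSn⟩ fun t ht => h2 t ht.1 ht.2
  rw [Real.dist_eq, abs_lt]
  constructor <;> linarith
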